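/- The function h(t) = t³·cos(t)/sin³(t), extended by continuity at 0 (with h(0) = 1), is decreasing on [0, π/2]. -/

import Mathlib

open Real Set

private lemma gaux : ∀ u ∈ Icc (0:ℝ) π, 0 ≤ Real.sin u - u * Real.cos u := by
  have hmono : MonotoneOn (fun u => Real.sin u - u * Real.cos u) (Icc 0 π) := by
    apply monotoneOn_of_hasDerivWithinAt_nonneg (f' := fun u => u * Real.sin u)
      (convex_Icc 0 π)
    · fun_prop
    · intro x hx
      have : HasDerivAt (fun u => Real.sin u - u * Real.cos u) (x * Real.sin x) x := by
        have h1 := (Real.hasDerivAt_sin x).sub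
          ((hasDerivAt_id x).mul (Real.hasDerivAt_cos x))
        refine h1.congr_deriv ?_; simp only [id_eq]; ring
      exact this.hasDerivWithinAt
    · intro x hx
      rw [interior_Icc] at hx
      exact mul_nonneg hx.1.le (Real.sin_nonneg_of_nonneg_of_le_pi hx.1.le hx.2.le)
  intro u hu
  have := hmono (left_mem_Icc.2 Real.pi_nonneg) hu hu.1
  simpa using this

private lemma f'aux : ∀ u ∈ Icc (0:ℝ) π, 0 ≤ 2 - 2 * Real.cos u - u * Real.sin u := by
  have hmono : MonotoneOn (fun u => 2 - 2 * Real.cos u - u * Real.sin u) (Icc 0 π) := by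
    apply monotoneOn_of_hasDerivWithinAt_nonneg
      (f' := fun u => Real.sin u - u * Real.cos u) (convex_Icc 0 π)
    · fun_prop
    · intro x hx
      have : HasDerivAt (fun u => 2 - 2 * Real.cos u - u * Real.sin u)
          (Real.sin x - x * Real.cos x) x := by
        have h1 := ((hasDerivAt_const x (2:ℝ)).sub
          ((hasDerivAt_const x (2:ℝ)).mul (Real.hasDerivAt_cos x))).sub
          ((hasDerivAt_id x).mul (Real.hasDerivAt_sin x))
        refine h1.congr_deriv ?_; simp only [id_eq]; ring
      exact this.hasDerivWithinAt
    · intro x hx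
      rw [interior_Icc] at hx
      exact gaux x ⟨hx.1.le, hx.2.le⟩
  intro u hu
  have := hmono (left_mem_Icc.2 Real.pi_nonneg) hu hu.1
  simpa using this

private lemma cusa : ∀ u ∈ Icc (0:ℝ) π, 3 * Real.sin u ≤ u * (2 + Real.cos u) := by
  have hmono : MonotoneOn (fun u => u * (2 + Real.cos u) - 3 * Real.sin u) (Icc 0 π) := by
    apply monotoneOn_of_hasDerivWithinAt_nonneg
      (f' := fun u => 2 - 2 * Real.cos u - u * Real.sin u) (convex_Icc 0 π)
    · fun_prop
    · intro x hx
      have : HasDerivAt (fun u => u * (2 + Real.cos u) - 3 * Real.sin u)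
          (2 - 2 * Real.cos x - x * Real.sin x) x := by
        have h1 := ((hasDerivAt_id x).mul
          ((hasDerivAt_const x (2:ℝ)).add (Real.hasDerivAt_cos x))).sub
          ((hasDerivAt_const x (3:ℝ)).mul (Real.hasDerivAt_sin x))
        refine h1.congr_deriv ?_; simp only [id_eq, Pi.add_apply]; ring
      exact this.hasDerivWithinAt
    · intro x hx
      rw [interior_Icc] at hx
      exact f'aux x ⟨hx.1.le, hx.2.le⟩
  intro u hu
  have := hmono (left_mem_Icc.2 Real.pi_nonneg) hu hu.1
  simp at this
  linarith

private lemma key : ∀ t ∈ Icc (0:ℝ) (π/2),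
    3 * Real.sin t * Real.cos t ≤ t * (Real.sin t ^ 2 + 3 * Real.cos t ^ 2) := by
  intro t ht
  have h2t : (2*t) ∈ Icc (0:ℝ) π := ⟨by linarith [ht.1], by linarith [ht.2]⟩
  have h := cusa (2*t) h2t
  rw [Real.sin_two_mul, Real.cos_two_mul] at h
  have hp : t * (Real.sin t ^ 2 + Real.cos t ^ 2) = t := by
    rw [Real.sin_sq_add_cos_sq]; ring
  nlinarith [hp]

theorem h_decreasing :
    AntitoneOn (fun t : ℝ => if t = 0 then 1 else t ^ 3 * Real.cos t / (Real.sin t) ^ 3)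
      (Set.Icc 0 (π / 2)) := by
  set h : ℝ → ℝ := fun t => if t = 0 then 1 else t ^ 3 * Real.cos t / (Real.sin t) ^ 3 with hh
  set F : ℝ → ℝ := fun t => t ^ 3 * Real.cos t / (Real.sin t) ^ 3 with hF
  have hpi : (0:ℝ) < π / 2 := by positivity
  -- continuity
  have hcont : ContinuousOn h (Icc 0 (π/2)) := by
    intro x hx
    rcases eq_or_ne x 0 with rfl | hx0
    · -- continuity at 0
      have hsin : Filter.Tendsto (fun t : ℝ => Real.sin t / t) (nhdsWithin 0 {(0:ℝ)}ᶜ) (nhds 1) := by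
        have := Real.hasDerivAt_sin 0
        rw [hasDerivAt_iff_tendsto_slope] at this
        rw [Real.cos_zero] at this
        apply this.congr
        intro t
        rw [slope_def_field]
        simp
      have hdiv : Filter.Tendsto (fun t : ℝ => t / Real.sin t) (nhdsWithin 0 {(0:ℝ)}ᶜ) (nhds 1) := by
        have := hsin.inv₀ (by norm_num)
        simpa using this
      have hFlim : Filter.Tendsto F (nhdsWithin 0 {(0:ℝ)}ᶜ) (nhds 1) := by
        have hcos : Filter.Tendsto Real.cos (nhdsWithin 0 {(0:ℝ)}ᶜ) (nhds 1) := by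
          have := Real.continuous_cos.tendsto 0
          rw [Real.cos_zero] at this
          exact this.mono_left nhdsWithin_le_nhds
        have := ((hdiv.pow 3).mul hcos)
        simp only [one_pow, one_mul] at this
        apply this.congr
        intro t
        rw [hF]
        rw [div_pow]
        ring
      have hhlim : Filter.Tendsto h (nhdsWithin 0 {(0:ℝ)}ᶜ) (nhds 1) := by
        apply hFlim.congr'
        filter_upwards [self_mem_nhdsWithin] with t ht
        have ht' : t ≠ 0 := ht
        simp [hh, hF, ht']
      have hupd : h = Function.update F 0 1 := by
        funext t
        by_cases ht : t = 0 <;> simp [hh, hF, Function.update, ht]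
      rw [hupd]
      rw [continuousWithinAt_update_same]
      exact hFlim.mono_left (nhdsWithin_mono _ (fun t ht => ht.2))
    · have hsin_ne : Real.sin x ≠ 0 := by
        have hx1 : 0 < x := lt_of_le_of_ne hx.1 (Ne.symm hx0)
        exact (Real.sin_pos_of_pos_of_lt_pi hx1 (by linarith [hx.2, Real.pi_pos])).ne'
      have hFc : ContinuousAt F x := by
        apply ContinuousAt.div (by fun_prop) (by fun_prop)
        positivity
      have : ContinuousAt h x := by
        apply hFc.congr
        filter_upwards [isOpen_compl_singleton.mem_nhds hx0] with t ht
        have ht' : t ≠ 0 := ht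
        simp [hh, hF, ht']
      exact this.continuousWithinAt
  apply antitoneOn_of_hasDerivWithinAt_nonpos (convex_Icc _ _) hcont
    (f' := fun x => ((3*x^2*Real.cos x - x^3*Real.sin x) * Real.sin x ^ 3
      - x^3*Real.cos x * (3 * Real.sin x ^ 2 * Real.cos x)) / (Real.sin x ^ 3) ^ 2)
  · intro x hx
    rw [interior_Icc] at hx
    have hsin_pos : 0 < Real.sin x :=
      Real.sin_pos_of_pos_of_lt_pi hx.1 (by linarith [hx.2, Real.pi_pos])
    have hFd : HasDerivAt F (((3*x^2*Real.cos x - x^3*Real.sin x) * Real.sin x ^ 3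
        - x^3*Real.cos x * (3 * Real.sin x ^ 2 * Real.cos x)) / (Real.sin x ^ 3) ^ 2) x := by
      have hnum : HasDerivAt (fun t => t ^ 3 * Real.cos t)
          (3*x^2*Real.cos x - x^3*Real.sin x) x := by
        have := (hasDerivAt_pow 3 x).mul (Real.hasDerivAt_cos x)
        exact this.congr_deriv (by norm_num; ring)
      have hden : HasDerivAt (fun t => Real.sin t ^ 3) (3 * Real.sin x ^ 2 * Real.cos x) x := by
        have := (Real.hasDerivAt_sin x).pow 3
        exact this.congr_deriv (by norm_num)
      exact hnum.div hden (by positivity)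
    have hhd : HasDerivAt h (((3*x^2*Real.cos x - x^3*Real.sin x) * Real.sin x ^ 3
        - x^3*Real.cos x * (3 * Real.sin x ^ 2 * Real.cos x)) / (Real.sin x ^ 3) ^ 2) x := by
      apply hFd.congr_of_eventuallyEq
      filter_upwards [isOpen_compl_singleton.mem_nhds (show x ≠ 0 from hx.1.ne')] with t ht
      have ht' : t ≠ 0 := ht
      simp [hh, hF, ht']
    exact hhd.hasDerivWithinAt
  · intro x hx
    rw [interior_Icc] at hx
    have hsin_pos : 0 < Real.sin x :=
      Real.sin_pos_of_pos_of_lt_pi hx.1 (by linarith [hx.2, Real.pi_pos])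
    have hk := key x ⟨hx.1.le, hx.2.le⟩
    apply div_nonpos_of_nonpos_of_nonneg _ (by positivity)
    nlinarith [sq_nonneg x, hx.1, sq_nonneg (Real.sin x), mul_pos hx.1 hsin_pos,
      sq_nonneg (x * Real.sin x)]
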